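/- Let S = {f : ℕ → Circle | ∀ i, (f(i+1))^2 = f(i)} be the dyadic solenoid, and for each i let Π_i : [1,2] × S → [1,2] × Circle denote the map Π_i(r, f) = (r, f(i)). If M ⊆ [1,2] × S is a compact connected set whose projections onto [1,2] and onto S are both surjective, then for every i the set M_i = Π_i(M) is essential in the annulus [1,2] × Circle, i.e. the boundary circles {1} × Circle and {2} × Circle lie in distinct connected components of ([1,2] × Circle) \ M_i. -/

import Mathlib

open Complex Set

noncomputable section
namespace SolenoidProof




/-- Determination: equal as angles + both in `(-π, π]` implies equal as reals. -/
lemma angle_det {a b : ℝ} (ha : a ∈ Set.Ioc (-Real.pi) Real.pi)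
    (hb : b ∈ Set.Ioc (-Real.pi) Real.pi)
    (h : (a : Real.Angle) = (b : Real.Angle)) : a = b := by
  rw [Real.Angle.angle_eq_iff_two_pi_dvd_sub] at h
  obtain ⟨k, hk⟩ := h
  have hpi := Real.pi_pos
  have hk1 : |(k : ℝ)| < 1 := by
    by_contra hcon
    push_neg at hcon
    have : (2 * Real.pi) * 1 ≤ (2 * Real.pi) * |(k:ℝ)| := by
      apply mul_le_mul_of_nonneg_left hcon (by linarith)
    have habs : |a - b| = 2 * Real.pi * |(k:ℝ)| := by
      rw [hk]; rw [abs_mul]; rw [abs_of_pos (by linarith : (0:ℝ) < 2 * Real.pi)]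
    have h2 : |a - b| < 2 * Real.pi := by
      rw [abs_sub_lt_iff]
      constructor <;> nlinarith [ha.1, ha.2, hb.1, hb.2]
    nlinarith
  have hk0 : k = 0 := by
    have h2 : |k| < 1 := by exact_mod_cast (by simpa [Int.cast_abs] using hk1 : ((|k| : ℤ) : ℝ) < 1)
    rcases abs_lt.mp h2 with ⟨h3, h4⟩
    omega
  subst hk0
  simp at hk
  linarith

/-- `|exp(aI) - exp(bI)| ≤ |a - b|`. -/
lemma expI_lip (a b : ℝ) :
    ‖Complex.exp (a * I) - Complex.exp (b * I)‖ ≤ |a - b| := by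
  have h1 : Complex.exp (↑a * I) - Complex.exp (↑b * I)
      = Complex.exp (↑b * I) * (Complex.exp (↑(a - b) * I) - 1) := by
    rw [mul_sub, ← Complex.exp_add, mul_one]
    push_cast
    ring_nf
  rw [h1, norm_mul, Complex.norm_exp_ofReal_mul_I, one_mul]
  set θ := a - b with hθdef
  clear_value θ
  have hre : (Complex.exp (↑θ * I) - 1).re = Real.cos θ - 1 := by
    simp [Complex.exp_ofReal_mul_I_re]
  have him : (Complex.exp (↑θ * I) - 1).im = Real.sin θ := by
    simp [Complex.exp_ofReal_mul_I_im]
  have hsq : (‖Complex.exp (↑θ * I) - 1‖)^2 = 2 - 2 * Real.cos θ := by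
    rw [Complex.sq_norm, Complex.normSq_apply, hre, him]
    have := Real.sin_sq_add_cos_sq θ
    ring_nf
    nlinarith [Real.sin_sq_add_cos_sq θ]
  have hcos := Real.one_sub_sq_div_two_le_cos (x := θ)
  have h2 : (‖Complex.exp (↑θ * I) - 1‖)^2 ≤ θ^2 := by
    rw [hsq]; linarith [hcos]
  have h3 := norm_nonneg (Complex.exp (↑θ * I) - 1)
  have h4 : |θ| ≥ 0 := abs_nonneg θ
  nlinarith [_root_.sq_abs θ]

/-- chord-arc: `|arg w| ≤ 2 |w - 1|` for `|w| = 1`. -/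
lemma arg_le_two_chord {w : ℂ} (hw : ‖w‖ = 1) :
    |Complex.arg w| ≤ 2 * ‖w - 1‖ := by
  set θ := Complex.arg w with hθ
  have hwexp : w = Complex.exp (↑θ * I) := by
    conv_lhs => rw [← Complex.norm_mul_exp_arg_mul_I w]
    rw [hw]; simp [hθ]
  have hre : (w - 1).re = Real.cos θ - 1 := by
    rw [hwexp]; simp [Complex.exp_ofReal_mul_I_re]
  have him : (w - 1).im = Real.sin θ := by
    rw [hwexp]; simp [Complex.exp_ofReal_mul_I_im]
  have hsq : (‖w - 1‖)^2 = 2 - 2 * Real.cos θ := by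
    rw [Complex.sq_norm, Complex.normSq_apply, hre, him]
    nlinarith [Real.sin_sq_add_cos_sq θ]
  -- 2 - 2 cos θ = 4 sin²(θ/2) ≥ 4 (θ/π)² ≥ θ²/4 · ... ; use Jordan: sin(|θ|/2) ≥ |θ|/π
  have hθpi : |θ| ≤ Real.pi := Complex.abs_arg_le_pi w
  have hpi := Real.pi_pos
  have hj : 2 / Real.pi * (|θ| / 2) ≤ Real.sin (|θ| / 2) :=
    Real.mul_le_sin (by positivity) (by linarith)
  have hsin2 : Real.sin (|θ|/2) ^ 2 = (2 - 2 * Real.cos θ) / 4 := by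
    have h2 := Real.sin_sq_eq_half_sub (|θ|/2)
    have hc : Real.cos (2 * (|θ|/2)) = Real.cos θ := by
      rcases abs_cases θ with ⟨h, _⟩ | ⟨h, _⟩
      · rw [h]; ring_nf
      · rw [h]; rw [show 2 * (-θ/2) = -θ by ring, Real.cos_neg]
    rw [← hc]; rw [h2]; ring
  have hsinpos : 0 ≤ Real.sin (|θ|/2) := by
    apply Real.sin_nonneg_of_nonneg_of_le_pi (by positivity) (by linarith)
  have key : (2 / Real.pi * (|θ| / 2))^2 ≤ (2 - 2*Real.cos θ)/4 := by
    rw [← hsin2]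
    exact pow_le_pow_left₀ (by positivity) hj 2
  have hπ2 : Real.pi ≤ 4 := by nlinarith [Real.pi_le_four]
  have habs := norm_nonneg (w - 1)
  -- (|θ|/π)² ≤ |w-1|²/4  so |θ| ≤ (π/2)|w-1| ≤ 2|w-1|
  have h5 : (|θ| / Real.pi)^2 ≤ ((‖w-1‖)/2)^2 := by
    calc (|θ| / Real.pi)^2 = (2 / Real.pi * (|θ| / 2))^2 := by ring_nf
    _ ≤ (2 - 2*Real.cos θ)/4 := key
    _ = ((‖w-1‖)/2)^2 := by rw [div_pow, hsq]; ring
  have h6 : |θ| / Real.pi ≤ (‖w-1‖)/2 := by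
    have := abs_le_abs (a := |θ| / Real.pi) (b := (‖w-1‖)/2)
    nlinarith [abs_nonneg θ]
  calc |θ| = Real.pi * (|θ| / Real.pi) := by field_simp
  _ ≤ 4 * ((‖w-1‖)/2) := by
      apply mul_le_mul hπ2 h6 (by positivity) (by linarith)
  _ = 2 * ‖w - 1‖ := by ring

lemma arg_div_le_two_dist {z w : ℂ} (hz : ‖z‖ = 1) (hw : ‖w‖ = 1) :
    |Complex.arg (w / z)| ≤ 2 * ‖w - z‖ := by
  have hz0 : z ≠ 0 := by intro h; rw [h] at hz; simp at hz
  have h1 : ‖w / z‖ = 1 := by rw [norm_div, hz, hw]; norm_num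
  have h2 : ‖w / z - 1‖ = ‖w - z‖ := by
    have : w / z - 1 = (w - z) / z := by field_simp
    rw [this, norm_div, hz, div_one]
  rw [← h2]
  exact arg_le_two_chord h1

lemma exp_I_periodic (a : ℝ) (n : ℤ) :
    Complex.exp (↑(a + 2 * Real.pi * n) * I) = Complex.exp (↑a * I) := by
  push_cast
  rw [add_mul, Complex.exp_add]
  have : (2 * ↑Real.pi * (n:ℂ)) * I = ↑n * (2 * ↑Real.pi * I) := by ring
  rw [this, Complex.exp_int_mul_two_pi_mul_I, mul_one]

lemma exp_I_inj {a b : ℝ} (h : Complex.exp (↑a * I) = Complex.exp (↑b * I)) :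
    ∃ n : ℤ, a = b + 2 * Real.pi * n := by
  rw [Complex.exp_eq_exp_iff_exists_int] at h
  obtain ⟨n, hn⟩ := h
  refine ⟨n, ?_⟩
  have h2 := congrArg Complex.im hn
  simp [Complex.add_im, Complex.mul_im, Complex.mul_re] at h2
  linarith




/-- Chain connectivity within an open complement: if `p, q` are in the same
connected component of `Cᶜ`, there is a finite chain with safe steps. -/
lemma chain_exists {X : Type*} [MetricSpace X] {C : Set X} (hC : IsClosed C)
    (hCne : C.Nonempty) {p q : X} (hp : p ∉ C) (hq : q ∉ C)
    (hcomp : connectedComponentIn Cᶜ p = connectedComponentIn Cᶜ q) :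
    ∃ (n : ℕ) (x : ℕ → X), x 0 = p ∧ x n = q ∧ (∀ j, x j ∉ C) ∧
      ∀ j < n, dist (x j) (x (j+1)) < Metric.infDist (x j) C / 4 ∧
               dist (x j) (x (j+1)) < Metric.infDist (x (j+1)) C / 4 := by
  set ρ : X → ℝ := fun a => Metric.infDist a C with hρdef
  have hρpos : ∀ a, a ∉ C → 0 < ρ a := fun a ha =>
    (hC.notMem_iff_infDist_pos hCne).mp ha
  have hρlip : ∀ a b : X, ρ a ≤ ρ b + dist a b := fun a b =>
    Metric.infDist_le_infDist_add_dist
  set step : X → X → Prop := fun a b =>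
    a ∉ C ∧ b ∉ C ∧ dist a b < ρ a / 4 ∧ dist a b < ρ b / 4 with hstepdef
  set R : Set X := {y | Relation.ReflTransGen step p y} with hRdef
  -- key local step
  have hlocal : ∀ y z : X, y ∉ C → z ∉ C → dist y z < ρ y / 8 → step y z := by
    intro y z hy hz hd
    have h1 : 0 < ρ y := hρpos y hy
    have h2 : ρ y ≤ ρ z + dist y z := hρlip y z
    refine ⟨hy, hz, by linarith, by linarith⟩
  -- q ∈ R by preconnectedness
  have hqR : q ∈ R := by
    set K := connectedComponentIn Cᶜ p with hK
    have hKpre : IsPreconnected K := isPreconnected_connectedComponentIn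
    have hpK : p ∈ K := mem_connectedComponentIn hp
    have hqK : q ∈ K := by
      rw [hcomp]; exact mem_connectedComponentIn hq
    have hKC : K ⊆ Cᶜ := connectedComponentIn_subset _ _
    by_contra hqR
    set U : Set X := ⋃ y ∈ K ∩ R, Metric.ball y (ρ y / 8) with hU
    set V : Set X := ⋃ y ∈ K \ R, Metric.ball y (ρ y / 8) with hV
    have hUopen : IsOpen U := isOpen_biUnion fun _ _ => Metric.isOpen_ball
    have hVopen : IsOpen V := isOpen_biUnion fun _ _ => Metric.isOpen_ball
    have hKUV : K ⊆ U ∪ V := by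
      intro y hy
      have : y ∈ Metric.ball y (ρ y / 8) :=
        Metric.mem_ball_self (by have := hρpos y (hKC hy); linarith)
      by_cases hyR : y ∈ R
      · exact Or.inl (mem_biUnion ⟨hy, hyR⟩ this)
      · exact Or.inr (mem_biUnion ⟨hy, hyR⟩ this)
    have hinU : ∀ z ∈ K ∩ U, z ∈ R := by
      rintro z ⟨hzK, hzU⟩
      obtain ⟨y, hy, hz⟩ := mem_iUnion₂.mp hzU
      have hyC : y ∉ C := hKC hy.1
      have hzC : z ∉ C := hKC hzK
      have : step y z := hlocal y z hyC hzC (by rw [Metric.mem_ball, dist_comm] at hz; exact hz)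
      exact Relation.ReflTransGen.tail hy.2 this
    have hinV : ∀ z ∈ K ∩ V, z ∉ R := by
      rintro z ⟨hzK, hzV⟩ hzR
      obtain ⟨y, hy, hz⟩ := mem_iUnion₂.mp hzV
      have hyC : y ∉ C := hKC hy.1
      have hzC : z ∉ C := hKC hzK
      have hd : dist z y < ρ y / 8 := by rw [Metric.mem_ball] at hz; exact hz
      have h1 : 0 < ρ y := hρpos y hyC
      have h2 : ρ y ≤ ρ z + dist y z := by
        have := hρlip y z; rwa [dist_comm y z] at this ⊢
      have hst : step z y := ⟨hzC, hyC, by rw [dist_comm] at hd ⊢; linarith, by linarith⟩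
      exact hy.2 (Relation.ReflTransGen.tail hzR hst)
    have hne : (K ∩ (U ∩ V)).Nonempty := by
      apply hKpre U V hUopen hVopen hKUV
      · exact ⟨p, hpK, mem_biUnion ⟨hpK, Relation.ReflTransGen.refl⟩
          (Metric.mem_ball_self (by have := hρpos p hp; linarith))⟩
      · exact ⟨q, hqK, mem_biUnion ⟨hqK, hqR⟩
          (Metric.mem_ball_self (by have := hρpos q hq; linarith))⟩
    obtain ⟨z, hzK, hzU, hzV⟩ := hne
    exact hinV z ⟨hzK, hzV⟩ (hinU z ⟨hzK, hzU⟩)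
  -- convert to a chain function
  clear hcomp hq
  induction hqR with
  | refl => exact ⟨0, fun _ => p, rfl, rfl, fun _ => hp, fun j hj => by omega⟩
  | @tail b c hb hbc ih =>
      obtain ⟨n, x, hx0, hxn, hxC, hxstep⟩ := ih
      refine ⟨n + 1, fun j => if j ≤ n then x j else c, by simp [hx0], by simp, ?_, ?_⟩
      · intro j
        by_cases hj : j ≤ n
        · simpa [hj] using hxC j
        · simpa [hj] using hbc.2.1
      · intro j hj
        by_cases hjn : j < n
        · have h1 : j ≤ n := by omega
          have h2 : j + 1 ≤ n := by omega
          simpa [h1, h2] using hxstep j hjn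
        · have hjeq : j = n := by omega
          subst hjeq
          have h1 : j ≤ j := le_refl j
          have h2 : ¬ (j + 1 ≤ j) := by omega
          simp only [h1, h2, if_true, if_false]
          rw [hxn]
          exact ⟨hbc.2.2.1, hbc.2.2.2⟩

/-- Extraction of a clopen neighborhood of a connected component inside a
compact set, avoiding a given disjoint closed subset. -/
lemma clopen_piece {K : Set ℂ} (hK : IsCompact K) {z₀ : ℂ} (hz₀ : z₀ ∈ K)
    {R : Set ℂ} (hR : IsClosed R) (hRK : R ⊆ K)
    (hdisj : Disjoint (connectedComponentIn K z₀) R) :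
    ∃ U : Set ℂ, connectedComponentIn K z₀ ⊆ U ∧ U ⊆ K \ R ∧ IsCompact U ∧
      ∃ V : Set ℂ, IsOpen V ∧ U = V ∩ K := by
  haveI : CompactSpace K := isCompact_iff_compactSpace.mp hK
  set x₀ : K := ⟨z₀, hz₀⟩ with hx₀
  have hcc : connectedComponentIn K z₀ = Subtype.val '' connectedComponent x₀ :=
    connectedComponentIn_eq_image hz₀
  set R' : Set K := Subtype.val ⁻¹' R with hR'
  have hR'closed : IsClosed R' := hR.preimage continuous_subtype_val
  have hR'comp : IsCompact R' := hR'closed.isCompact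
  have hR'disj : R' ⊆ (connectedComponent x₀)ᶜ := by
    intro y hy hy2
    have : (y : ℂ) ∈ connectedComponentIn K z₀ := by
      rw [hcc]; exact ⟨y, hy2, rfl⟩
    exact hdisj.ne_of_mem this hy rfl
  -- cover R' by complements of clopens containing the component
  have hiInter := connectedComponent_eq_iInter_isClopen x₀
  have hcover : R' ⊆ ⋃ (Z : {Z : Set K // IsClopen Z ∧ x₀ ∈ Z}), (Z : Set K)ᶜ := by
    intro y hy
    have hynotin : y ∉ connectedComponent x₀ := fun h => hR'disj hy h
    rw [hiInter] at hynotin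
    simp only [mem_iInter, not_forall] at hynotin
    obtain ⟨Z, hZ⟩ := hynotin
    exact mem_iUnion.mpr ⟨Z, hZ⟩
  obtain ⟨t, ht⟩ := hR'comp.elim_finite_subcover _
    (fun Z : {Z : Set K // IsClopen Z ∧ x₀ ∈ Z} => Z.2.1.compl.isOpen) hcover
  set U' : Set K := ⋂ Z ∈ t, (Z : Set K) with hU'
  have hU'clopen : IsClopen U' := isClopen_biInter_finset fun Z _ => Z.2.1
  have hU'comp : connectedComponent x₀ ⊆ U' := by
    apply subset_iInter₂
    intro Z _
    exact Z.2.1.connectedComponent_subset Z.2.2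
  have hU'R' : U' ∩ R' = ∅ := by
    ext y
    simp only [mem_inter_iff, mem_empty_iff_false, iff_false, not_and]
    intro hyU hyR
    obtain ⟨Z, hZt, hZy⟩ := mem_iUnion₂.mp (ht hyR)
    exact hZy (mem_iInter₂.mp hyU Z hZt)
  refine ⟨Subtype.val '' U', ?_, ?_, ?_, ?_⟩
  · rw [hcc]; exact image_mono hU'comp
  · rintro z ⟨y, hy, rfl⟩
    refine ⟨y.2, fun hzR => ?_⟩
    have hmem : y ∈ U' ∩ R' := ⟨hy, hzR⟩
    rw [hU'R'] at hmem
    simp at hmem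
  · exact (hU'clopen.isClosed.isCompact).image continuous_subtype_val
  · obtain ⟨V, hVopen, hVeq⟩ := isOpen_induced_iff.mp hU'clopen.isOpen
    refine ⟨V, hVopen, ?_⟩
    rw [← hVeq, Subtype.image_preimage_coe, inter_comm]




lemma angle_det' {a b : ℝ} (ha : a ∈ Set.Ioc (-Real.pi) Real.pi)
    (hb : b ∈ Set.Ioc (-Real.pi) Real.pi)
    (h : (a : Real.Angle) = (b : Real.Angle)) : a = b := angle_det ha hb h

/-- `arg` of a quotient of two complex numbers in the right half plane. -/
lemma arg_div_right_half {u u' : ℂ} (hu : 0 < u.re) (hu' : 0 < u'.re) :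
    Complex.arg (u' / u) = Complex.arg u' - Complex.arg u := by
  have hu0 : u ≠ 0 := by intro h; rw [h] at hu; simp at hu
  have hu'0 : u' ≠ 0 := by intro h; rw [h] at hu'; simp at hu'
  have h1 : |Complex.arg u| < Real.pi / 2 :=
    Complex.abs_arg_lt_pi_div_two_iff.mpr (Or.inl hu)
  have h2 : |Complex.arg u'| < Real.pi / 2 :=
    Complex.abs_arg_lt_pi_div_two_iff.mpr (Or.inl hu')
  rcases abs_lt.mp h1 with ⟨h1a, h1b⟩
  rcases abs_lt.mp h2 with ⟨h2a, h2b⟩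
  have hpi := Real.pi_pos
  apply angle_det' (Complex.arg_mem_Ioc _) ⟨by linarith, by linarith⟩
  rw [Complex.arg_div_coe_angle hu'0 hu0, Real.Angle.coe_sub]

lemma angle_coe_sum {ι : Type*} (s : Finset ι) (f : ι → ℝ) :
    ((∑ i ∈ s, f i : ℝ) : Real.Angle) = ∑ i ∈ s, ((f i : ℝ) : Real.Angle) := by
  induction s using Finset.cons_induction with
  | empty => simp
  | cons a s ha ih => rw [Finset.sum_cons, Finset.sum_cons, Real.Angle.coe_add, ih]

set_option maxHeartbeats 1000000 in
/-- The winding-sum separation lemma: a polyline (extended by vertical rays at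
its two endpoints) separates its far left from its far right: no connected set
avoiding it contains points on both sides. -/
lemma wind (N : ℕ) (ζ : ℕ → ℂ) (Z : Set ℂ) (hZ : IsPreconnected Z)
    (hseg : ∀ j < N, ∀ t : ℝ, t ∈ Set.Icc (0:ℝ) 1 → ζ j + (t:ℂ) * (ζ (j+1) - ζ j) ∉ Z)
    (hray0 : ∀ t : ℝ, 0 ≤ t → ζ 0 - (t:ℂ) * I ∉ Z)
    (hrayN : ∀ t : ℝ, 0 ≤ t → ζ N + (t:ℂ) * I ∉ Z)
    {x y : ℂ} (hx : x ∈ Z) (hy : y ∈ Z)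
    (hxl : ∀ j ≤ N, x.re < (ζ j).re) (hyr : ∀ j ≤ N, (ζ j).re < y.re) : False := by
  have hpi := Real.pi_pos
  -- the polyline vertices are never in Z
  have hne : ∀ v ∈ Z, ∀ j ≤ N, ζ j - v ≠ 0 := by
    intro v hv j hj
    rw [sub_ne_zero]
    intro hjv
    rcases lt_or_eq_of_le hj with hlt | heq
    · exact hseg j hlt 0 ⟨le_refl _, zero_le_one⟩ (by simpa [hjv] using hv)
    · subst heq; exact hrayN 0 (le_refl _) (by simpa [hjv] using hv)
  -- the winding sum
  set w : ℂ → ℝ := fun v => Complex.arg ((ζ 0 - v) * I)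
      + (∑ j ∈ Finset.range N, Complex.arg ((ζ (j+1) - v) / (ζ j - v)))
      + Complex.arg (I / (ζ N - v)) with hwdef
  -- slit plane facts
  have hs1 : ∀ v ∈ Z, (ζ 0 - v) * I ∈ Complex.slitPlane := by
    intro v hv
    rw [Complex.mem_slitPlane_iff]
    by_contra hcon
    push_neg at hcon
    obtain ⟨h1, h2⟩ := hcon
    simp only [Complex.mul_re, Complex.mul_im, Complex.I_re, Complex.I_im] at h1 h2
    -- h1 : re ≤ 0 where re = -(ζ0 - v).im ; h2 : im = (ζ0 - v).re = 0
    have hre : (ζ 0 - v).re = 0 := by linarith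
    have him : 0 ≤ (ζ 0 - v).im := by linarith
    apply hray0 ((ζ 0 - v).im) him
    have heq : ζ 0 - ((ζ 0 - v).im : ℂ) * I = v := by
      have hre2 : (ζ 0).re - v.re = 0 := by simpa [Complex.sub_re] using hre
      apply Complex.ext
      · simp [Complex.sub_re]
        linarith
      · simp [Complex.sub_im]
    rwa [heq]
  have hs2 : ∀ v ∈ Z, ∀ j < N, (ζ (j+1) - v) / (ζ j - v) ∈ Complex.slitPlane := by
    intro v hv j hj
    rw [Complex.mem_slitPlane_iff]
    by_contra hcon
    push_neg at hcon
    obtain ⟨h1, h2⟩ := hcon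
    set c : ℝ := ((ζ (j+1) - v) / (ζ j - v)).re with hc
    have hceq : (ζ (j+1) - v) / (ζ j - v) = (c : ℂ) := by
      apply Complex.ext
      · simp [hc]
      · simpa using h2
    have hdenom : ζ j - v ≠ 0 := hne v hv j (le_of_lt hj)
    have heq : ζ (j+1) - v = (c:ℂ) * (ζ j - v) := by
      rw [← hceq]; field_simp
    have h1c : (0:ℝ) < 1 - c := by linarith
    have h1c' : ((1:ℂ) - (c:ℂ)) ≠ 0 := by
      intro hcon2
      have : (1:ℝ) - c = 0 := by exact_mod_cast congrArg Complex.re hcon2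
      linarith
    apply hseg j hj (1/(1-c)) ⟨by positivity, by rw [div_le_one h1c]; linarith⟩
    have hv' : ζ j + ((1/(1-c) : ℝ):ℂ) * (ζ (j+1) - ζ j) = v := by
      push_cast
      field_simp
      linear_combination heq
    rwa [hv']
  have hs3 : ∀ v ∈ Z, I / (ζ N - v) ∈ Complex.slitPlane := by
    intro v hv
    rw [Complex.mem_slitPlane_iff]
    by_contra hcon
    push_neg at hcon
    obtain ⟨h1, h2⟩ := hcon
    set c : ℝ := (I / (ζ N - v)).re with hc
    have hceq : I / (ζ N - v) = (c : ℂ) := by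
      apply Complex.ext
      · simp [hc]
      · simpa using h2
    have hdenom : ζ N - v ≠ 0 := hne v hv N (le_refl _)
    have heq : I = (c:ℂ) * (ζ N - v) := by
      rw [← hceq]; field_simp
    have hc0 : c ≠ 0 := by
      intro hc0
      rw [hc0] at heq
      simp at heq
    have hclt : c < 0 := lt_of_le_of_ne h1 hc0
    apply hrayN (-1/c) (div_pos_iff.mpr (Or.inr ⟨by norm_num, hclt⟩)).le
    have hv' : ζ N + ((-1/c : ℝ):ℂ) * I = v := by
      have hcC : (c:ℂ) ≠ 0 := by exact_mod_cast hc0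
      push_cast
      field_simp
      linear_combination -heq
    rwa [hv']
  -- continuity of w on Z
  have hwcont : ContinuousOn w Z := by
    have c1 : ContinuousOn (fun v => Complex.arg ((ζ 0 - v) * I)) Z := by
      intro v hv
      apply ContinuousAt.continuousWithinAt
      have hinner : ContinuousAt (fun a : ℂ => (ζ 0 - a) * I) v :=
        ((continuous_const.sub continuous_id).mul continuous_const).continuousAt
      exact ContinuousAt.comp (g := Complex.arg) (f := fun a : ℂ => (ζ 0 - a) * I)
        (Complex.continuousAt_arg (hs1 v hv)) hinner
    have c2 : ContinuousOn
        (fun v => ∑ j ∈ Finset.range N, Complex.arg ((ζ (j+1) - v) / (ζ j - v))) Z := by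
      apply continuousOn_finset_sum
      intro j hj
      rw [Finset.mem_range] at hj
      intro v hv
      apply ContinuousAt.continuousWithinAt
      have hinner : ContinuousAt (fun a : ℂ => (ζ (j+1) - a) / (ζ j - a)) v :=
        ContinuousAt.div ((continuous_const.sub continuous_id).continuousAt)
          ((continuous_const.sub continuous_id).continuousAt) (hne v hv j (le_of_lt hj))
      exact ContinuousAt.comp (g := Complex.arg) (f := fun a : ℂ => (ζ (j+1) - a) / (ζ j - a))
        (Complex.continuousAt_arg (hs2 v hv j hj)) hinner
    have c3 : ContinuousOn (fun v => Complex.arg (I / (ζ N - v))) Z := by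
      intro v hv
      apply ContinuousAt.continuousWithinAt
      have hinner : ContinuousAt (fun a : ℂ => I / (ζ N - a)) v :=
        ContinuousAt.div continuousAt_const
          ((continuous_const.sub continuous_id).continuousAt) (hne v hv N (le_refl _))
      exact ContinuousAt.comp (g := Complex.arg) (f := fun a : ℂ => I / (ζ N - a))
        (Complex.continuousAt_arg (hs3 v hv)) hinner
    exact (c1.add c2).add c3
  -- value of w mod 2π is π
  have hmodZ : ∀ v ∈ Z, ∃ k : ℤ, w v = Real.pi + 2 * Real.pi * k := by
    intro v hv
    have hI : (I : ℂ) ≠ 0 := Complex.I_ne_zero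
    set A0 : Real.Angle := (Complex.arg (ζ 0 - v) : Real.Angle) with hA0
    set AN : Real.Angle := (Complex.arg (ζ N - v) : Real.Angle) with hAN
    have e1 : ((Complex.arg ((ζ 0 - v) * I) : ℝ) : Real.Angle)
        = A0 + ((Real.pi/2 : ℝ) : Real.Angle) := by
      rw [Complex.arg_mul_coe_angle (hne v hv 0 (Nat.zero_le _)) hI, Complex.arg_I]
    have e3 : ((Complex.arg (I / (ζ N - v)) : ℝ) : Real.Angle)
        = ((Real.pi/2 : ℝ) : Real.Angle) - AN := by
      rw [Complex.arg_div_coe_angle hI (hne v hv N (le_refl _)), Complex.arg_I]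
    have e2 : ((∑ j ∈ Finset.range N, Complex.arg ((ζ (j+1) - v) / (ζ j - v)) : ℝ) : Real.Angle)
        = AN - A0 := by
      have hcoesum : ((∑ j ∈ Finset.range N, Complex.arg ((ζ (j+1) - v) / (ζ j - v)) : ℝ)
          : Real.Angle)
          = ∑ j ∈ Finset.range N, ((Complex.arg ((ζ (j+1) - v) / (ζ j - v)) : ℝ)
          : Real.Angle) := by
        exact angle_coe_sum _ _
      rw [hcoesum]
      have hterm : ∀ j ∈ Finset.range N,
          ((Complex.arg ((ζ (j+1) - v) / (ζ j - v)) : ℝ) : Real.Angle)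
          = (Complex.arg (ζ (j+1) - v) : Real.Angle) - (Complex.arg (ζ j - v) : Real.Angle) := by
        intro j hj
        rw [Finset.mem_range] at hj
        exact Complex.arg_div_coe_angle (hne v hv (j+1) hj) (hne v hv j (le_of_lt hj))
      rw [Finset.sum_congr rfl hterm]
      exact Finset.sum_range_sub (fun j => (Complex.arg (ζ j - v) : Real.Angle)) N
    have hcoe : ((w v : ℝ) : Real.Angle) = ((Real.pi : ℝ) : Real.Angle) := by
      have hwv : w v = Complex.arg ((ζ 0 - v) * I)
          + (∑ j ∈ Finset.range N, Complex.arg ((ζ (j+1) - v) / (ζ j - v)))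
          + Complex.arg (I / (ζ N - v)) := rfl
      rw [hwv, Real.Angle.coe_add, Real.Angle.coe_add, e1, e2, e3]
      have : A0 + ((Real.pi/2 : ℝ) : Real.Angle) + (AN - A0)
          + (((Real.pi/2 : ℝ) : Real.Angle) - AN)
          = ((Real.pi/2 : ℝ) : Real.Angle) + ((Real.pi/2 : ℝ) : Real.Angle) := by abel
      rw [this, ← Real.Angle.coe_add]
      congr 1
      ring
    rw [Real.Angle.angle_eq_iff_two_pi_dvd_sub] at hcoe
    obtain ⟨k, hk⟩ := hcoe
    exact ⟨k, by linarith⟩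
  -- value at the far-left point x
  have hwx : w x = Real.pi := by
    have hpos : ∀ j ≤ N, 0 < (ζ j - x).re := by
      intro j hj
      rw [Complex.sub_re]
      linarith [hxl j hj]
    have hφbound : ∀ j ≤ N, |Complex.arg (ζ j - x)| < Real.pi / 2 := fun j hj =>
      Complex.abs_arg_lt_pi_div_two_iff.mpr (Or.inl (hpos j hj))
    have hterm1 : Complex.arg ((ζ 0 - x) * I) = Complex.arg (ζ 0 - x) + Real.pi / 2 := by
      have hb := abs_lt.mp (hφbound 0 (Nat.zero_le _))
      apply angle_det' (Complex.arg_mem_Ioc _) ⟨by linarith, by linarith⟩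
      rw [Complex.arg_mul_coe_angle (hne x hx 0 (Nat.zero_le _)) Complex.I_ne_zero,
        Complex.arg_I, Real.Angle.coe_add]
    have hterm3 : Complex.arg (I / (ζ N - x)) = Real.pi / 2 - Complex.arg (ζ N - x) := by
      have hb := abs_lt.mp (hφbound N (le_refl _))
      apply angle_det' (Complex.arg_mem_Ioc _) ⟨by linarith, by linarith⟩
      rw [Complex.arg_div_coe_angle Complex.I_ne_zero (hne x hx N (le_refl _)),
        Complex.arg_I, Real.Angle.coe_sub]
    have hsum : ∑ j ∈ Finset.range N, Complex.arg ((ζ (j+1) - x) / (ζ j - x))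
        = Complex.arg (ζ N - x) - Complex.arg (ζ 0 - x) := by
      have hmid : ∀ j ∈ Finset.range N, Complex.arg ((ζ (j+1) - x) / (ζ j - x))
          = Complex.arg (ζ (j+1) - x) - Complex.arg (ζ j - x) := by
        intro j hj
        rw [Finset.mem_range] at hj
        exact arg_div_right_half (hpos j (le_of_lt hj)) (hpos (j+1) hj)
      rw [Finset.sum_congr rfl hmid]
      exact Finset.sum_range_sub (fun j => Complex.arg (ζ j - x)) N
    have hwv : w x = Complex.arg ((ζ 0 - x) * I)
        + (∑ j ∈ Finset.range N, Complex.arg ((ζ (j+1) - x) / (ζ j - x)))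
        + Complex.arg (I / (ζ N - x)) := rfl
    rw [hwv, hterm1, hterm3, hsum]
    ring
  -- value at the far-right point y
  have hwy : w y = -Real.pi := by
    have hpos : ∀ j ≤ N, 0 < (y - ζ j).re := by
      intro j hj
      rw [Complex.sub_re]
      linarith [hyr j hj]
    have hne' : ∀ j ≤ N, y - ζ j ≠ 0 := by
      intro j hj h
      have h2 := hpos j hj
      rw [h] at h2
      simp at h2

    have hφbound : ∀ j ≤ N, |Complex.arg (y - ζ j)| < Real.pi / 2 := fun j hj =>
      Complex.abs_arg_lt_pi_div_two_iff.mpr (Or.inl (hpos j hj))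
    have hterm1 : Complex.arg ((ζ 0 - y) * I) = Complex.arg (y - ζ 0) - Real.pi / 2 := by
      have hb := abs_lt.mp (hφbound 0 (Nat.zero_le _))
      apply angle_det' (Complex.arg_mem_Ioc _) ⟨by linarith, by linarith⟩
      rw [show (ζ 0 - y) * I = (y - ζ 0) * (-I) by ring,
        Complex.arg_mul_coe_angle (hne' 0 (Nat.zero_le _)) (neg_ne_zero.mpr Complex.I_ne_zero),
        Complex.arg_neg_I, Real.Angle.coe_sub]
      rw [sub_eq_add_neg, Real.Angle.coe_neg]
      abel
    have hterm3 : Complex.arg (I / (ζ N - y)) = -(Real.pi / 2) - Complex.arg (y - ζ N) := by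
      have hb := abs_lt.mp (hφbound N (le_refl _))
      apply angle_det' (Complex.arg_mem_Ioc _) ⟨by linarith, by linarith⟩
      rw [show I / (ζ N - y) = -I / (y - ζ N) by
        rw [show ζ N - y = -(y - ζ N) by ring, div_neg, neg_div],
        Complex.arg_div_coe_angle (neg_ne_zero.mpr Complex.I_ne_zero) (hne' N (le_refl _)),
        Complex.arg_neg_I, Real.Angle.coe_sub, Real.Angle.coe_neg]
    have hsum : ∑ j ∈ Finset.range N, Complex.arg ((ζ (j+1) - y) / (ζ j - y))
        = Complex.arg (y - ζ N) - Complex.arg (y - ζ 0) := by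
      have hmid : ∀ j ∈ Finset.range N, Complex.arg ((ζ (j+1) - y) / (ζ j - y))
          = Complex.arg (y - ζ (j+1)) - Complex.arg (y - ζ j) := by
        intro j hj
        rw [Finset.mem_range] at hj
        rw [show (ζ (j+1) - y) / (ζ j - y) = (y - ζ (j+1)) / (y - ζ j) by
          rw [show ζ (j+1) - y = -(y - ζ (j+1)) by ring, show ζ j - y = -(y - ζ j) by ring,
            neg_div_neg_eq]]
        exact arg_div_right_half (hpos j (le_of_lt hj)) (hpos (j+1) hj)
      rw [Finset.sum_congr rfl hmid]
      exact Finset.sum_range_sub (fun j => Complex.arg (y - ζ j)) N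
    have hwv : w y = Complex.arg ((ζ 0 - y) * I)
        + (∑ j ∈ Finset.range N, Complex.arg ((ζ (j+1) - y) / (ζ j - y)))
        + Complex.arg (I / (ζ N - y)) := rfl
    rw [hwv, hterm1, hterm3, hsum]
    ring
  -- conclude by the intermediate value theorem
  have himg : IsPreconnected (w '' Z) := hZ.image w hwcont
  have h0 : (0:ℝ) ∈ w '' Z := by
    have hIcc : Set.Icc (-Real.pi) Real.pi ⊆ w '' Z :=
      himg.Icc_subset ⟨y, hy, hwy⟩ ⟨x, hx, hwx⟩
    exact hIcc ⟨by linarith, by linarith⟩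
  obtain ⟨v, hv, hv0⟩ := h0
  obtain ⟨k, hk⟩ := hmodZ v hv
  rw [hv0] at hk
  have hmul : Real.pi * (1 + 2*(k:ℝ)) = 0 := by linarith
  have h2 : (1 + 2*(k:ℝ)) = 0 := by
    rcases mul_eq_zero.mp hmul with h | h
    · linarith
    · exact h
  have h3 : (1 + 2*k : ℤ) = 0 := by exact_mod_cast h2
  omega





abbrev Sol := {f : ℕ → Circle // ∀ i, (f (i + 1)) ^ 2 = f i}

lemma circle_coe_pow (z : Circle) (n : ℕ) : ((z^n : Circle) : ℂ) = (z:ℂ)^n := by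
  induction n with
  | zero => simp
  | succ n ih => rw [pow_succ, pow_succ, Circle.coe_mul, ih]

lemma sol_pow (f : Sol) (i k : ℕ) : (f.1 (i+k))^(2^k) = f.1 i := by
  induction k with
  | zero => simp
  | succ k ih =>
      have h1 : (2:ℕ)^(k+1) = 2 * 2^k := by ring
      rw [h1, pow_mul]
      rw [show i + (k+1) = (i + k) + 1 by omega]
      rw [f.2 (i+k)]
      exact ih

lemma solenoid_eval_surj
    (M : Set ((Set.Icc (1:ℝ) 2) × Sol))
    (hproj₂ : Prod.snd '' M = Set.univ) (j : ℕ) (z : Circle) :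
    ∃ m ∈ M, (m.2 : Sol).1 j = z := by
  have hsq : ∀ w : Circle, (Circle.exp (Complex.arg (w : ℂ) / 2))^2 = w := by
    intro w
    rw [sq, ← Circle.exp_add]
    rw [show Complex.arg (w:ℂ) / 2 + Complex.arg (w:ℂ) / 2 = Complex.arg (w:ℂ) by ring]
    exact Circle.exp_arg w
  set h : ℕ → Circle := fun n =>
    Nat.rec z (fun _ w => Circle.exp (Complex.arg (w : ℂ) / 2)) n with hh
  have hh0 : h 0 = z := rfl
  have hhs : ∀ n, (h (n+1))^2 = h n := fun n => hsq (h n)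
  set g : ℕ → Circle := fun l => if l ≤ j then z ^ (2^(j - l)) else h (l - j) with hg
  have hgprop : ∀ l, (g (l+1))^2 = g l := by
    intro l
    rcases lt_trichotomy l j with hl | hl | hl
    · have h1 : l + 1 ≤ j := hl
      have h2 : l ≤ j := le_of_lt hl
      simp only [hg, if_pos h1, if_pos h2]
      rw [← pow_mul]
      congr 1
      rw [← pow_succ]
      congr 1
      omega
    · subst hl
      have h1 : ¬ (l + 1 ≤ l) := by omega
      simp only [hg, if_neg h1, if_pos (le_refl l)]
      rw [show l + 1 - l = 1 by omega, show l - l = 0 by omega]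
      rw [pow_zero, pow_one]
      have := hhs 0
      rwa [hh0] at this
    · have h1 : ¬ (l + 1 ≤ j) := by omega
      have h2 : ¬ (l ≤ j) := by omega
      simp only [hg, if_neg h1, if_neg h2]
      rw [show l + 1 - j = (l - j) + 1 by omega]
      exact hhs (l - j)
  have hmem : (⟨g, hgprop⟩ : Sol) ∈ Prod.snd '' M := by
    rw [hproj₂]; trivial
  obtain ⟨m, hmM, hm2⟩ := hmem
  refine ⟨m, hmM, ?_⟩
  rw [hm2]
  show g j = z
  rw [hg]
  simp only [if_pos (le_refl j)]
  rw [show j - j = 0 by omega, pow_zero, pow_one]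


end SolenoidProof
end

/-- A compact connected subset `C` of the annulus `[1,2] × Circle` is *essential*
if the two boundary circles `{1} × Circle` and `{2} × Circle` lie in distinct
connected components of the complement of `C`: no connected component of the
complement contains points of both boundary circles. -/
def EssentialInAnnulus (C : Set ((Set.Icc (1:ℝ) 2) × Circle)) : Prop :=
  ∀ p q : (Set.Icc (1:ℝ) 2) × Circle, (p.1 : ℝ) = 1 → (q.1 : ℝ) = 2 →
    p ∉ C → q ∉ C → connectedComponentIn Cᶜ p ≠ connectedComponentIn Cᶜ q

open SolenoidProof in
set_option maxHeartbeats 4000000 in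
/-- If `M` is a subcontinuum of `[1,2] × S` (the product of an arc and the dyadic
solenoid) with full projections onto both factors, then each of its projections
`Π_i(M)` to the annulus `[1,2] × Circle` is essential. -/
theorem projections_essential
    (M : Set ((Set.Icc (1:ℝ) 2) × {f : ℕ → Circle // ∀ i, (f (i + 1)) ^ 2 = f i}))
    (hMcomp : IsCompact M) (hMconn : IsConnected M)
    (hproj₁ : Prod.fst '' M = Set.univ)
    (hproj₂ : Prod.snd '' M = Set.univ)
    (i : ℕ) :
    EssentialInAnnulus
      ((fun p : (Set.Icc (1:ℝ) 2) × {f : ℕ → Circle // ∀ i, (f (i + 1)) ^ 2 = f i} =>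
        (p.1, p.2.1 i)) '' M) := by
  intro p q hp1 hq2 hpC hqC hcomp
  set C : Set ((Set.Icc (1:ℝ) 2) × Circle) :=
    ((fun p : (Set.Icc (1:ℝ) 2) × Sol => (p.1, p.2.1 i)) '' M) with hCdef
  -- continuity of the coordinate projections
  have hlevcont : ∀ k : ℕ, Continuous (fun m : (Set.Icc (1:ℝ) 2) × Sol =>
      (((m.1 : ℝ), ((m.2 : Sol).1 k : ℂ)) : ℝ × ℂ)) := by
    intro k
    apply Continuous.prodMk
    · exact continuous_subtype_val.comp continuous_fst
    · exact continuous_subtype_val.comp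
        (((continuous_apply k).comp (continuous_subtype_val.comp continuous_snd)))
  have hCicont : Continuous (fun m : (Set.Icc (1:ℝ) 2) × Sol =>
      ((m.1, (m.2 : Sol).1 i) : (Set.Icc (1:ℝ) 2) × Circle)) := by
    apply Continuous.prodMk continuous_fst
    exact (continuous_apply i).comp (continuous_subtype_val.comp continuous_snd)
  have hCcomp : IsCompact C := hMcomp.image hCicont
  have hCclosed : IsClosed C := hCcomp.isClosed
  have hCne : C.Nonempty := hMconn.nonempty.image _
  -- extract the chain
  obtain ⟨N, x, hx0, hxN, hxC, hxstep⟩ := chain_exists hCclosed hCne hpC hqC hcomp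
  -- coordinates of the chain
  set rr : ℕ → ℝ := fun j => ((x j).1 : ℝ) with hrr
  set zz : ℕ → ℂ := fun j => ((x j).2 : ℂ) with hzz
  have habs : ∀ j, ‖zz j‖ = 1 := fun j => Circle.norm_coe _
  have hzne : ∀ j, zz j ≠ 0 := fun j => Circle.coe_ne_zero _
  have hrr0 : rr 0 = 1 := by rw [hrr]; simp only [hx0]; exact hp1
  have hrrN : rr N = 2 := by rw [hrr]; simp only [hxN]; exact hq2
  -- distances
  have hdistA : ∀ a b : (Set.Icc (1:ℝ) 2) × Circle,
      dist a b = max (dist (a.1 : ℝ) (b.1 : ℝ)) (dist (a.2 : ℂ) (b.2 : ℂ)) := by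
    intro a b
    rw [Prod.dist_eq, Subtype.dist_eq]; rfl
  -- the polyline
  set ζ : ℕ → ℂ := fun n => Nat.rec ((Complex.arg (zz 0) : ℂ) + (rr 0 : ℂ) * I)
      (fun j prev => prev + ((rr (j+1) - rr j : ℝ) : ℂ) * I
        + (Complex.arg (zz (j+1) / zz j) : ℂ)) n with hζdef
  have hζ0 : ζ 0 = (Complex.arg (zz 0) : ℂ) + (rr 0 : ℂ) * I := rfl
  have hζsucc : ∀ j, ζ (j+1) = ζ j + ((rr (j+1) - rr j : ℝ) : ℂ) * I
      + (Complex.arg (zz (j+1) / zz j) : ℂ) := fun j => rfl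
  have hζim : ∀ j, (ζ j).im = rr j := by
    intro j
    induction j with
    | zero => simp [hζ0]
    | succ j ih => rw [hζsucc j]; simp [ih]
  have hζexp : ∀ j, Complex.exp (((ζ j).re : ℂ) * I) = zz j := by
    intro j
    induction j with
    | zero =>
        have hre : (ζ 0).re = Complex.arg (zz 0) := by rw [hζ0]; simp
        rw [hre]
        have := Complex.norm_mul_exp_arg_mul_I (zz 0)
        rwa [habs 0, Complex.ofReal_one, one_mul] at this
    | succ j ih =>
        have hre : (ζ (j+1)).re = (ζ j).re + Complex.arg (zz (j+1) / zz j) := by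
          rw [hζsucc j]; simp
        rw [hre]
        push_cast
        rw [add_mul, Complex.exp_add, ih]
        have habsd : ‖zz (j+1) / zz j‖ = 1 := by
          rw [norm_div, habs, habs, div_one]
        have hexp : Complex.exp ((Complex.arg (zz (j+1) / zz j) : ℂ) * I)
            = zz (j+1) / zz j := by
          have := Complex.norm_mul_exp_arg_mul_I (zz (j+1) / zz j)
          rwa [habsd, Complex.ofReal_one, one_mul] at this
        rw [hexp, mul_comm, div_mul_cancel₀ _ (hzne j)]
  -- level sets in ℝ × ℂ
  set Fmap : ℂ → ℝ × ℂ := fun v => (v.im, Complex.exp ((v.re : ℂ) * I)) with hFmap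
  have hFcont : Continuous Fmap := by
    apply Continuous.prodMk Complex.continuous_im
    exact Complex.continuous_exp.comp
      ((Complex.continuous_ofReal.comp Complex.continuous_re).mul continuous_const)
  set Cp : ℕ → Set (ℝ × ℂ) := fun k =>
    (fun m : (Set.Icc (1:ℝ) 2) × Sol => (((m.1 : ℝ), ((m.2 : Sol).1 (i+k) : ℂ)) : ℝ × ℂ)) '' M
    with hCp
  have hCpcomp : ∀ k, IsCompact (Cp k) := fun k => hMcomp.image (hlevcont (i+k))
  have hCpconn : ∀ k, IsConnected (Cp k) := fun k => hMconn.image _ (hlevcont (i+k)).continuousOn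
  have hCpmem : ∀ k, ∀ y ∈ Cp k, y.1 ∈ Set.Icc (1:ℝ) 2 ∧ ‖y.2‖ = 1 := by
    rintro k y ⟨m, hm, rfl⟩
    exact ⟨m.1.2, Circle.norm_coe _⟩
  set Chat : ℕ → Set ℂ := fun k => Fmap ⁻¹' (Cp k) with hChat
  have hChatclosed : ∀ k, IsClosed (Chat k) := fun k =>
    ((hCpcomp k).isClosed).preimage hFcont
  have hChatIm : ∀ k, ∀ v ∈ Chat k, 1 ≤ v.im ∧ v.im ≤ 2 := by
    intro k v hv
    have h := (hCpmem k _ hv).1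
    exact ⟨h.1, h.2⟩
  -- relation between C and Cp 0
  have hCp0' : ∀ a : (Set.Icc (1:ℝ) 2) × Circle, ((a.1 : ℝ), (a.2 : ℂ)) ∈ Cp 0 → a ∈ C := by
    rintro a ⟨m, hm, hme⟩
    refine ⟨m, hm, ?_⟩
    have h1 : (m.1 : ℝ) = (a.1 : ℝ) := congrArg Prod.fst hme
    have h2 : ((m.2 : Sol).1 (i+0) : ℂ) = (a.2 : ℂ) := congrArg Prod.snd hme
    apply Prod.ext
    · exact Subtype.ext h1
    · exact Circle.ext (by simpa using h2)
  have hpnot : ((p.1 : ℝ), (p.2 : ℂ)) ∉ Cp 0 := fun h => hpC (hCp0' p h)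
  have hqnot : ((q.1 : ℝ), (q.2 : ℂ)) ∉ Cp 0 := fun h => hqC (hCp0' q h)
  -- segments avoid Chat 0
  have hseg : ∀ j < N, ∀ t : ℝ, t ∈ Set.Icc (0:ℝ) 1 → ∀ nn : ℤ,
      ζ j + (t:ℂ) * (ζ (j+1) - ζ j) + ((2 * Real.pi * nn : ℝ) : ℂ) ∉ Chat 0 := by
    intro j hj t ht nn hmem
    set σ := ζ j + (t:ℂ) * (ζ (j+1) - ζ j) + ((2 * Real.pi * nn : ℝ) : ℂ) with hσ
    set d := Complex.arg (zz (j+1) / zz j) with hd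
    have hδ : ζ (j+1) - ζ j = ((rr (j+1) - rr j : ℝ) : ℂ) * I + (d : ℂ) := by
      rw [hζsucc j]; ring
    have hσim : σ.im = rr j + t * (rr (j+1) - rr j) := by
      rw [hσ, hδ]
      simp [hζim j]
    have hσre : σ.re = ((ζ j).re + t * d) + 2 * Real.pi * nn := by
      rw [hσ, hδ]
      simp
      try ring
    set D := dist (x j) (x (j+1)) with hD
    have hDnn : 0 ≤ D := dist_nonneg
    have hDr : |rr (j+1) - rr j| ≤ D := by
      rw [hD, hdistA]
      rw [show |rr (j+1) - rr j| = dist ((x j).1 : ℝ) ((x (j+1)).1 : ℝ) by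
        rw [Real.dist_eq, abs_sub_comm]]
      exact le_max_left _ _
    have hDz : ‖zz (j+1) - zz j‖ ≤ D := by
      rw [hD, hdistA]
      rw [show ‖zz (j+1) - zz j‖ = dist ((x j).2 : ℂ) ((x (j+1)).2 : ℂ) by
        rw [Complex.dist_eq, norm_sub_rev]]
      exact le_max_right _ _
    have hd2 : |d| ≤ 2 * D := by
      have h := arg_div_le_two_dist (habs j) (habs (j+1))
      rw [← hd] at h
      linarith
    -- the point of C realized by hmem
    obtain ⟨m, hmM, hme⟩ := hmem
    set a : (Set.Icc (1:ℝ) 2) × Circle := (m.1, (m.2 : Sol).1 i) with ha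
    have haC : a ∈ C := ⟨m, hmM, rfl⟩
    have hafst : (a.1 : ℝ) = σ.im := by
      have := congrArg Prod.fst hme
      simpa using this
    have hasnd : (a.2 : ℂ) = Complex.exp ((σ.re : ℂ) * I) := by
      have := congrArg Prod.snd hme
      simpa using this
    -- distance from x j to a
    have htabs : |t| ≤ 1 := by rw [_root_.abs_of_nonneg ht.1]; exact ht.2
    have hfst : dist (rr j) ((a.1 : ℝ)) ≤ D := by
      rw [hafst, hσim, Real.dist_eq]
      rw [show rr j - (rr j + t * (rr (j+1) - rr j)) = -(t * (rr (j+1) - rr j)) by ring,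
        abs_neg, abs_mul]
      nlinarith [abs_nonneg (rr (j+1) - rr j), abs_nonneg t]
    have hsnd : dist (zz j) ((a.2 : ℂ)) ≤ 2 * D := by
      rw [hasnd, hσre, Complex.dist_eq]
      rw [exp_I_periodic ((ζ j).re + t * d) nn]
      have e1 : ‖zz j - Complex.exp ((((ζ j).re + t * d : ℝ) : ℂ) * I)‖
          = ‖Complex.exp (((ζ j).re : ℝ) * I)
            - Complex.exp ((((ζ j).re + t * d : ℝ) : ℂ) * I)‖ := by rw [hζexp j]
      rw [e1]
      have e2 := expI_lip ((ζ j).re) ((ζ j).re + t * d)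
      have e3 : |(ζ j).re - ((ζ j).re + t * d)| = |t| * |d| := by
        rw [show (ζ j).re - ((ζ j).re + t * d) = -(t*d) by ring, abs_neg, abs_mul]
      nlinarith [abs_nonneg d, abs_nonneg t]
    have hdista : dist (x j) a ≤ 2 * D := by
      rw [hdistA]
      apply max_le (le_trans hfst (by linarith)) hsnd
    have hinf : Metric.infDist (x j) C ≤ 2 * D := le_trans (Metric.infDist_le_dist_of_mem haC) hdista
    have hstep := (hxstep j hj).1
    rw [← hD] at hstep
    linarith
  -- ray points avoid Chat 0
  have hray0pt : ∀ nn : ℤ, ∀ t : ℝ, 0 ≤ t →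
      (ζ 0 + ((2 * Real.pi * nn : ℝ) : ℂ)) - (t:ℂ) * I ∉ Chat 0 := by
    intro nn t htt hmem
    have him : ((ζ 0 + ((2 * Real.pi * nn : ℝ) : ℂ)) - (t:ℂ) * I).im = 1 - t := by
      simp [hζim 0, hrr0]
    have h1 := (hChatIm 0 _ hmem).1
    rw [him] at h1
    have ht0 : t = 0 := by linarith
    subst ht0
    -- the point is ζ 0 + 2πnn;  Fmap of it equals (1, zz 0) = coords of p
    apply hpnot
    have hpt : Fmap ((ζ 0 + ((2 * Real.pi * nn : ℝ) : ℂ)) - (0:ℝ) * I)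
        = ((p.1 : ℝ), (p.2 : ℂ)) := by
      apply Prod.ext
      · show ((ζ 0 + ((2 * Real.pi * nn : ℝ) : ℂ)) - (0:ℝ) * I).im = (p.1 : ℝ)
        rw [him, hp1]; norm_num
      · show Complex.exp ((((ζ 0 + ((2 * Real.pi * nn : ℝ) : ℂ)) - (0:ℝ) * I).re : ℂ) * I)
          = (p.2 : ℂ)
        have hre : ((ζ 0 + ((2 * Real.pi * nn : ℝ) : ℂ)) - (0:ℝ) * I).re
            = (ζ 0).re + 2 * Real.pi * nn := by simp
        rw [hre, exp_I_periodic, hζexp 0]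
        rw [hzz]
        simp only [hx0]
    rw [← hpt]
    exact hmem
  have hrayNpt : ∀ nn : ℤ, ∀ t : ℝ, 0 ≤ t →
      (ζ N + ((2 * Real.pi * nn : ℝ) : ℂ)) + (t:ℂ) * I ∉ Chat 0 := by
    intro nn t htt hmem
    have him : ((ζ N + ((2 * Real.pi * nn : ℝ) : ℂ)) + (t:ℂ) * I).im = 2 + t := by
      simp [hζim N, hrrN]
    have h1 := (hChatIm 0 _ hmem).2
    rw [him] at h1
    have ht0 : t = 0 := by linarith
    subst ht0
    apply hqnot
    have hpt : Fmap ((ζ N + ((2 * Real.pi * nn : ℝ) : ℂ)) + (0:ℝ) * I)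
        = ((q.1 : ℝ), (q.2 : ℂ)) := by
      apply Prod.ext
      · show ((ζ N + ((2 * Real.pi * nn : ℝ) : ℂ)) + (0:ℝ) * I).im = (q.1 : ℝ)
        rw [him, hq2]; norm_num
      · show Complex.exp ((((ζ N + ((2 * Real.pi * nn : ℝ) : ℂ)) + (0:ℝ) * I).re : ℂ) * I)
          = (q.2 : ℂ)
        have hre : ((ζ N + ((2 * Real.pi * nn : ℝ) : ℂ)) + (0:ℝ) * I).re
            = (ζ N).re + 2 * Real.pi * nn := by simp
        rw [hre, exp_I_periodic, hζexp N]
        rw [hzz]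
        simp only [hxN]
    rw [← hpt]
    exact hmem
  -- bounds for vertex re's
  set T := (Finset.range (N+1)).image (fun j => (ζ j).re) with hT
  have hTne : T.Nonempty :=
    ⟨(ζ 0).re, Finset.mem_image.mpr ⟨0, Finset.mem_range.mpr (Nat.succ_pos N), rfl⟩⟩
  set minRe := T.min' hTne with hminRe
  set maxRe := T.max' hTne with hmaxRe
  have hminle : ∀ j ≤ N, minRe ≤ (ζ j).re := by
    intro j hj
    rw [hminRe]
    apply Finset.min'_le
    exact Finset.mem_image.mpr ⟨j, Finset.mem_range.mpr (Nat.lt_succ_of_le hj), rfl⟩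
  have hmaxge : ∀ j ≤ N, (ζ j).re ≤ maxRe := by
    intro j hj
    rw [hmaxRe]
    apply Finset.le_max'
    exact Finset.mem_image.mpr ⟨j, Finset.mem_range.mpr (Nat.lt_succ_of_le hj), rfl⟩
  have hWord : minRe ≤ maxRe := le_trans (hminle 0 (Nat.zero_le N)) (hmaxge 0 (Nat.zero_le N))
  set W := maxRe - minRe + 2 * Real.pi with hW
  have hpipos := Real.pi_pos
  have hWpos : 0 < W := by rw [hW]; linarith
  -- bounded width of connected subsets of Chat 0
  have hwide : ∀ Z : Set ℂ, IsPreconnected Z → Z ⊆ Chat 0 →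
      ∀ u ∈ Z, ∀ v ∈ Z, v.re - u.re ≤ W := by
    intro Z hZpre hZsub u hu v hv
    by_contra hcon
    push_neg at hcon
    have h2pi : 0 < 2 * Real.pi := by linarith
    set nn : ℤ := ⌊(u.re - minRe) / (2 * Real.pi)⌋ + 1 with hnn
    have h1 : u.re - minRe < 2 * Real.pi * nn := by
      have hfl := Int.lt_floor_add_one ((u.re - minRe) / (2 * Real.pi))
      rw [hnn]
      push_cast
      calc u.re - minRe = (u.re - minRe) / (2*Real.pi) * (2*Real.pi) := by field_simp
      _ < ((⌊(u.re - minRe) / (2 * Real.pi)⌋ : ℝ) + 1) * (2*Real.pi) :=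
          mul_lt_mul_of_pos_right hfl h2pi
      _ = 2*Real.pi*((⌊(u.re - minRe) / (2 * Real.pi)⌋ : ℝ) + 1) := by ring
    have h2 : 2 * Real.pi * nn ≤ u.re - minRe + 2*Real.pi := by
      have hfl := Int.floor_le ((u.re - minRe) / (2 * Real.pi))
      rw [hnn]
      push_cast
      have h3 := mul_le_mul_of_nonneg_right hfl h2pi.le
      calc 2*Real.pi*((⌊(u.re - minRe) / (2 * Real.pi)⌋ : ℝ) + 1)
          = (⌊(u.re - minRe) / (2 * Real.pi)⌋ : ℝ) * (2*Real.pi) + 2*Real.pi := by ring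
      _ ≤ (u.re - minRe) / (2 * Real.pi) * (2*Real.pi) + 2*Real.pi := by linarith
      _ = u.re - minRe + 2*Real.pi := by field_simp
    apply wind N (fun j => ζ j + ((2*Real.pi*nn : ℝ):ℂ)) Z hZpre ?_ ?_ ?_ hu hv ?_ ?_
    · intro j hj t ht hmemZ
      have hEq : (fun j => ζ j + ((2*Real.pi*nn : ℝ):ℂ)) j
          + (t:ℂ) * ((fun j => ζ j + ((2*Real.pi*nn : ℝ):ℂ)) (j+1)
            - (fun j => ζ j + ((2*Real.pi*nn : ℝ):ℂ)) j)
          = ζ j + (t:ℂ)*(ζ (j+1) - ζ j) + ((2*Real.pi*nn:ℝ):ℂ) := by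
        simp only []
        ring
      rw [hEq] at hmemZ
      exact hseg j hj t ht nn (hZsub hmemZ)
    · intro t htt hmemZ
      have hEq : (fun j => ζ j + ((2*Real.pi*nn : ℝ):ℂ)) 0 - (t:ℂ) * I
          = (ζ 0 + ((2 * Real.pi * nn : ℝ) : ℂ)) - (t:ℂ) * I := by simp only []
      rw [hEq] at hmemZ
      exact hray0pt nn t htt (hZsub hmemZ)
    · intro t htt hmemZ
      have hEq : (fun j => ζ j + ((2*Real.pi*nn : ℝ):ℂ)) N + (t:ℂ) * I
          = (ζ N + ((2 * Real.pi * nn : ℝ) : ℂ)) + (t:ℂ) * I := by simp only []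
      rw [hEq] at hmemZ
      exact hrayNpt nn t htt (hZsub hmemZ)
    · intro j hj
      have : ((fun j => ζ j + ((2*Real.pi*nn : ℝ):ℂ)) j).re = (ζ j).re + 2*Real.pi*nn := by
        simp
      rw [this]
      have := hminle j hj
      linarith
    · intro j hj
      have : ((fun j => ζ j + ((2*Real.pi*nn : ℝ):ℂ)) j).re = (ζ j).re + 2*Real.pi*nn := by
        simp
      rw [this]
      have := hmaxge j hj
      rw [hW] at hcon
      linarith
  -- choose k
  obtain ⟨k, hk⟩ := pow_unbounded_of_one_lt (W * 2) (one_lt_two (α := ℝ))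
  have h2k : (0:ℝ) < 2^k := by positivity
  -- scaled width bound for Chat k
  have hscale : ∀ Z : Set ℂ, IsPreconnected Z → Z ⊆ Chat k →
      ∀ u ∈ Z, ∀ v ∈ Z, v.re - u.re ≤ 1/2 := by
    intro Z hZpre hZsub u hu v hv
    set gk : ℂ → ℂ := fun v' => (((2:ℝ)^k * v'.re : ℝ) : ℂ) + (v'.im : ℂ) * I with hgk
    have hgkcont : Continuous gk := by
      apply Continuous.add
      · exact Complex.continuous_ofReal.comp (continuous_const.mul Complex.continuous_re)
      · exact (Complex.continuous_ofReal.comp Complex.continuous_im).mul continuous_const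
    have hgkim : ∀ v', (gk v').im = v'.im := by
      intro v'
      rw [hgk]
      simp only [Complex.add_im, Complex.ofReal_im, Complex.mul_im, Complex.ofReal_re,
        Complex.I_im, Complex.I_re]
      ring
    have hgkre : ∀ v', (gk v').re = 2^k * v'.re := by
      intro v'
      rw [hgk]
      simp only [Complex.add_re, Complex.ofReal_re, Complex.mul_re, Complex.ofReal_im,
        Complex.I_re, Complex.I_im]
      ring
    have hgkmaps : ∀ v' ∈ Chat k, gk v' ∈ Chat 0 := by
      intro v' hv'
      obtain ⟨m, hmM, hme⟩ := hv'
      refine ⟨m, hmM, ?_⟩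
      apply Prod.ext
      · show (m.1 : ℝ) = (Fmap (gk v')).1
        show (m.1 : ℝ) = (gk v').im
        rw [hgkim]
        exact congrArg Prod.fst hme
      · show ((m.2 : Sol).1 (i+0) : ℂ) = (Fmap (gk v')).2
        show ((m.2 : Sol).1 (i+0) : ℂ) = Complex.exp (((gk v').re : ℂ) * I)
        have hsnd : ((m.2 : Sol).1 (i+k) : ℂ) = Complex.exp ((v'.re : ℂ) * I) :=
          congrArg Prod.snd hme
        rw [hgkre]
        have hexpand : Complex.exp (((2^k * v'.re : ℝ) : ℂ) * I)
            = (Complex.exp ((v'.re:ℂ) * I))^(2^k : ℕ) := by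
          rw [← Complex.exp_nat_mul]
          congr 1
          push_cast
          ring
        rw [hexpand, ← hsnd, ← circle_coe_pow, sol_pow m.2 i k]
        simp
    have himg := hZpre.image gk hgkcont.continuousOn
    have himgsub : gk '' Z ⊆ Chat 0 := by
      rintro _ ⟨z', hz', rfl⟩
      exact hgkmaps z' (hZsub hz')
    have := hwide (gk '' Z) himg himgsub (gk u) ⟨u, hu, rfl⟩ (gk v) ⟨v, hv, rfl⟩
    rw [hgkre, hgkre] at this
    nlinarith
  -- base point
  obtain ⟨m₀, hm₀⟩ := hMconn.nonempty
  set z₀ : ℂ := ((m₀.2 : Sol).1 (i+k) : ℂ) with hz₀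
  set ζs : ℂ := (Complex.arg z₀ : ℂ) + ((m₀.1 : ℝ) : ℂ) * I with hζs
  have hζsim : ζs.im = (m₀.1 : ℝ) := by simp [hζs]
  have hζsre : ζs.re = Complex.arg z₀ := by simp [hζs]
  have hζsmem : ζs ∈ Chat k := by
    refine ⟨m₀, hm₀, ?_⟩
    apply Prod.ext
    · show (m₀.1 : ℝ) = ζs.im
      exact hζsim.symm
    · show z₀ = Complex.exp ((ζs.re : ℂ) * I)
      rw [hζsre]
      have habs0 : ‖z₀‖ = 1 := Circle.norm_coe _
      have h := Complex.norm_mul_exp_arg_mul_I z₀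
      rw [habs0, Complex.ofReal_one, one_mul] at h
      exact h.symm
  set c : ℝ := ζs.re with hc
  set Z := connectedComponentIn (Chat k) ζs with hZ
  have hZpre : IsPreconnected Z := isPreconnected_connectedComponentIn
  have hZsub : Z ⊆ Chat k := connectedComponentIn_subset _ _
  have hζsZ : ζs ∈ Z := mem_connectedComponentIn hζsmem
  have hZwidth : ∀ z' ∈ Z, |z'.re - c| ≤ 1/2 := by
    intro z' hz'
    rw [abs_le]
    constructor
    · have h := hscale Z hZpre hZsub z' hz' ζs hζsZ
      rw [← hc] at h
      linarith
    · have h := hscale Z hZpre hZsub ζs hζsZ z' hz'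
      rw [← hc] at h
      linarith
  -- a compact neighborhood
  set K₂ := Chat k ∩ {v' | |v'.re - c| ≤ 2} with hK₂
  have hrecont : Continuous (fun v' : ℂ => |v'.re - c|) :=
    (Complex.continuous_re.sub continuous_const).abs
  have hK₂closed : IsClosed K₂ :=
    (hChatclosed k).inter (isClosed_le hrecont continuous_const)
  have hK₂comp : IsCompact K₂ := by
    apply Metric.isCompact_of_isClosed_isBounded hK₂closed
    apply (Metric.isBounded_closedBall (x := (0:ℂ)) (r := |c| + 5)).subset
    intro v' hv'
    have him := hChatIm k v' hv'.1
    have hre : |v'.re - c| ≤ 2 := hv'.2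
    rw [Metric.mem_closedBall, Complex.dist_eq, sub_zero]
    calc ‖v'‖ ≤ |v'.re| + |v'.im| := Complex.norm_le_abs_re_add_abs_im v'
    _ ≤ |c| + 5 := by
        have h1 : |v'.re| ≤ |c| + 2 := by
          calc |v'.re| = |c + (v'.re - c)| := by ring_nf
          _ ≤ |c| + |v'.re - c| := abs_add_le _ _
          _ ≤ |c| + 2 := by linarith
        have h2 : |v'.im| ≤ 2 := abs_le.mpr ⟨by linarith [him.1], him.2⟩
        linarith
  have hζsK₂ : ζs ∈ K₂ := by
    refine ⟨hζsmem, ?_⟩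
    simp only [mem_setOf_eq, hc]
    rw [sub_self, abs_zero]
    norm_num
  have hZK₂eq : Z = connectedComponentIn K₂ ζs := by
    apply Subset.antisymm
    · apply IsPreconnected.subset_connectedComponentIn hZpre hζsZ
      intro z' hz'
      refine ⟨hZsub hz', ?_⟩
      simp only [mem_setOf_eq]
      have := hZwidth z' hz'
      have h2 := abs_le.mp this
      rw [abs_le]
      constructor <;> linarith [h2.1, h2.2]
    · apply IsPreconnected.subset_connectedComponentIn isPreconnected_connectedComponentIn
        (mem_connectedComponentIn hζsK₂)
      exact (connectedComponentIn_subset _ _).trans inter_subset_left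
  set RR := K₂ ∩ {v' | 3/2 ≤ |v'.re - c|} with hRR
  have hRRclosed : IsClosed RR :=
    hK₂closed.inter (isClosed_le continuous_const hrecont)
  have hdisj : Disjoint (connectedComponentIn K₂ ζs) RR := by
    rw [← hZK₂eq]
    rw [Set.disjoint_left]
    intro z' hz' hz'R
    have h1 := hZwidth z' hz'
    have h2 := hz'R.2
    simp only [mem_setOf_eq] at h2
    linarith
  obtain ⟨U, hU1, hU2, hU3, V, hVopen, hUV⟩ :=
    clopen_piece hK₂comp hζsK₂ hRRclosed inter_subset_left hdisj
  have hZU : Z ⊆ U := hZK₂eq ▸ hU1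
  have hUlt : ∀ u' ∈ U, |u'.re - c| < 3/2 := by
    intro u' hu'
    have h2 := hU2 hu'
    have h3 : ¬ (3/2 ≤ |u'.re - c|) := fun h => h2.2 ⟨h2.1, h⟩
    linarith [not_le.mp h3]
  have hUChat : U ⊆ Chat k := fun u' hu' => (hU2 hu').1.1
  have hUopen' : ∀ u' ∈ U, ∃ ε > 0, ∀ w', w' ∈ Chat k → dist w' u' < ε → w' ∈ U := by
    intro u' hu'
    have hu'V : u' ∈ V := by
      have := hUV ▸ hu'
      exact this.1
    obtain ⟨ε₀, hε₀, hball⟩ := Metric.isOpen_iff.mp hVopen u' hu'V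
    refine ⟨min ε₀ (1/8), by positivity, ?_⟩
    intro w' hw'Chat hdistw
    rw [hUV]
    refine ⟨hball (lt_of_lt_of_le hdistw (min_le_left _ _)), hw'Chat, ?_⟩
    simp only [mem_setOf_eq]
    have h1 : |w'.re - u'.re| ≤ dist w' u' := by
      rw [Complex.dist_eq, ← Complex.sub_re]
      exact Complex.abs_re_le_norm _
    have h2 := hUlt u' hu'
    have h3 : dist w' u' < 1/8 := lt_of_lt_of_le hdistw (min_le_right _ _)
    calc |w'.re - c| ≤ |w'.re - u'.re| + |u'.re - c| := by
          rw [show w'.re - c = (w'.re - u'.re) + (u'.re - c) by ring]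
          exact abs_add_le _ _
    _ ≤ 2 := by linarith
  set P := Fmap '' U with hP
  have hPsub : P ⊆ Cp k := by rintro y ⟨u', hu', rfl⟩; exact hUChat hu'
  have hPcomp : IsCompact P := hU3.image hFcont
  have hPopen : ∀ y ∈ P, ∃ δ > 0, ∀ y' ∈ Cp k, dist y' y < δ → y' ∈ P := by
    rintro y ⟨u', hu', rfl⟩
    obtain ⟨ε, hε, hball⟩ := hUopen' u' hu'
    refine ⟨ε/4, by positivity, ?_⟩
    rintro y' hy' hdisty
    obtain ⟨m, hmM, hme⟩ := hy'
    set r' : ℝ := (m.1 : ℝ) with hr'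
    set w'c : ℂ := ((m.2 : Sol).1 (i+k) : ℂ) with hw'c
    set zu : ℂ := Complex.exp ((u'.re : ℂ) * I) with hzu
    have habszu : ‖zu‖ = 1 := Complex.norm_exp_ofReal_mul_I _
    have habsw : ‖w'c‖ = 1 := Circle.norm_coe _
    have hzune : zu ≠ 0 := by
      intro h; rw [h] at habszu; simp at habszu
    set ζ' : ℂ := u' + ((r' - u'.im : ℝ) : ℂ) * I + (Complex.arg (w'c / zu) : ℂ) with hζ'
    have hζ'im : ζ'.im = r' := by simp [hζ']
    have hζ're : ζ'.re = u'.re + Complex.arg (w'c / zu) := by simp [hζ']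
    have habsd : ‖w'c / zu‖ = 1 := by rw [norm_div, habsw, habszu, div_one]
    have hexpd : Complex.exp ((Complex.arg (w'c / zu) : ℂ) * I) = w'c / zu := by
      have h := Complex.norm_mul_exp_arg_mul_I (w'c / zu)
      rwa [habsd, Complex.ofReal_one, one_mul] at h
    have hFζ' : Fmap ζ' = y' := by
      rw [← hme]
      apply Prod.ext
      · exact hζ'im
      · show Complex.exp ((ζ'.re : ℂ) * I) = w'c
        rw [hζ're]
        push_cast
        rw [add_mul, Complex.exp_add, hexpd]
        rw [← hzu, mul_comm, div_mul_cancel₀ _ hzune]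
    have hζ'Chat : ζ' ∈ Chat k := by
      show Fmap ζ' ∈ Cp k
      rw [hFζ']
      exact ⟨m, hmM, hme⟩
    -- distance estimate
    have hyFmap : Fmap u' = (u'.im, zu) := rfl
    have hdfst : |r' - u'.im| ≤ dist y' (Fmap u') := by
      rw [← hme, hyFmap, Prod.dist_eq]
      rw [show |r' - u'.im| = dist r' u'.im from Real.dist_eq _ _]
      exact le_max_left _ _
    have hdsnd : ‖w'c - zu‖ ≤ dist y' (Fmap u') := by
      rw [← hme, hyFmap, Prod.dist_eq]
      rw [show ‖w'c - zu‖ = dist w'c zu from (Complex.dist_eq _ _).symm]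
      exact le_max_right _ _
    have harg : |Complex.arg (w'c / zu)| ≤ 2 * ‖w'c - zu‖ :=
      arg_div_le_two_dist habszu habsw
    have hdistζ' : dist ζ' u' < ε := by
      rw [Complex.dist_eq]
      have hdiff : ζ' - u' = ((r' - u'.im : ℝ):ℂ)*I + (Complex.arg (w'c/zu) : ℂ) := by
        rw [hζ']; ring
      rw [hdiff]
      have hb : ‖((r' - u'.im : ℝ):ℂ)*I + (Complex.arg (w'c/zu) : ℂ)‖
          ≤ |r' - u'.im| + |Complex.arg (w'c/zu)| := by
        calc ‖((r' - u'.im : ℝ):ℂ)*I + (Complex.arg (w'c/zu) : ℂ)‖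
            ≤ ‖((r' - u'.im : ℝ):ℂ)*I‖
              + ‖(Complex.arg (w'c/zu) : ℂ)‖ := norm_add_le _ _
        _ = |r' - u'.im| + |Complex.arg (w'c/zu)| := by
            rw [norm_mul, Complex.norm_I, mul_one, Complex.norm_real, Complex.norm_real, Real.norm_eq_abs, Real.norm_eq_abs]
      have hd4 : dist y' (Fmap u') < ε/4 := hdisty
      linarith
    exact ⟨ζ', hball ζ' hζ'Chat hdistζ', hFζ'⟩
  -- P = Cp k by connectedness
  have hPall : Cp k ⊆ P := by
    have hconn := (hCpconn k).isPreconnected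
    haveI := Subtype.preconnectedSpace hconn
    set P' : Set (Cp k) := Subtype.val ⁻¹' P with hP'
    have hP'closed : IsClosed P' := (hPcomp.isClosed).preimage continuous_subtype_val
    have hP'open : IsOpen P' := by
      rw [Metric.isOpen_iff]
      rintro ⟨y, hyC⟩ hyP
      obtain ⟨δ, hδ, hball⟩ := hPopen y hyP
      refine ⟨δ, hδ, ?_⟩
      rintro ⟨y', hy'C⟩ hy'
      rw [Metric.mem_ball, Subtype.dist_eq] at hy'
      exact hball y' hy'C hy'
    have hP'ne : P'.Nonempty := ⟨⟨Fmap ζs, hζsmem⟩, ⟨ζs, hZU hζsZ, rfl⟩⟩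
    rcases isClopen_iff.mp ⟨hP'closed, hP'open⟩ with h | h
    · rw [h] at hP'ne
      simp at hP'ne
    · intro y hy
      have hmem : (⟨y, hy⟩ : Cp k) ∈ P' := by rw [h]; trivial
      exact hmem
  -- final contradiction via surjectivity
  obtain ⟨m, hmM, hmz⟩ := solenoid_eval_surj M hproj₂ (i+k) (Circle.exp (c + Real.pi))
  have hy' : (((m.1 : ℝ), ((m.2 : Sol).1 (i+k) : ℂ)) : ℝ × ℂ) ∈ Cp k := ⟨m, hmM, rfl⟩
  obtain ⟨u', hu'U, hu'e⟩ := hPall hy'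
  have hsnd : Complex.exp ((u'.re : ℂ) * I) = Complex.exp ((↑(c + Real.pi) : ℂ) * I) := by
    have h := congrArg Prod.snd hu'e
    show (Fmap u').2 = _
    rw [h]
    show ((m.2 : Sol).1 (i+k) : ℂ) = _
    rw [hmz, Circle.coe_exp]
  obtain ⟨n, hn⟩ := exp_I_inj hsnd
  have hUlt' := hUlt u' hu'U
  have hpi3 := Real.pi_gt_three
  have habsn : (1:ℝ) ≤ |(1 + 2*(n:ℝ))| := by
    have h1 : (1:ℤ) ≤ |1 + 2*n| := by rcases abs_cases (1+2*n) with ⟨h,_⟩|⟨h,_⟩ <;> omega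
    calc (1:ℝ) = ((1:ℤ):ℝ) := by norm_num
    _ ≤ ((|1 + 2*n| : ℤ) : ℝ) := by exact_mod_cast h1
    _ = |(1 + 2*(n:ℝ))| := by push_cast [Int.cast_abs]; norm_num
  have hre : u'.re - c = Real.pi * (1 + 2*n) := by rw [hn]; ring
  rw [hre, abs_mul, abs_of_pos (by linarith : (0:ℝ) < Real.pi)] at hUlt'
  nlinarith
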